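/- Let g, d be integers with g ≥ 3 and 3 ≤ d ≤ ⌊(g+3)/2⌋. Consider the lattice Λ = ℤH ⊕ ℤF with intersection form H² = 2g−2, H·F = d, F² = 0. If a vector L = sH + tF ∈ Λ satisfies L² = −2, then d divides g, and writing g = md, L = ±(H − mF). -/

import Mathlib

/-- The intersection form of the rank-2 lattice `ℤH ⊕ ℤF` with Gram matrix
`[[2g-2, d], [d, 0]]` in the basis `H = (1,0)`, `F = (0,1)`. -/
def ip (g d : ℤ) (u v : ℤ × ℤ) : ℤ :=
  u.1 * v.1 * (2 * g - 2) + (u.1 * v.2 + u.2 * v.1) * d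

/-- The class `H`. -/
def Hc : ℤ × ℤ := (1, 0)

/-- The class `F`. -/
def Fc : ℤ × ℤ := (0, 1)

/-- If `g ≥ 3`, `3 ≤ d ≤ ⌊(g+3)/2⌋`, and `L = sH + tF` has `L² = -2` in the
lattice `ℤH ⊕ ℤF` with `H² = 2g-2`, `H·F = d`, `F² = 0`, then `d ∣ g` and,
writing `g = md`, `L = ±(H - mF)`. -/
theorem stmt0 (g d s t : ℤ) (hg : 3 ≤ g) (hd : 3 ≤ d) (hd' : d ≤ (g + 3) / 2)
    (hL : ip g d (s, t) (s, t) = -2) :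
    d ∣ g ∧ ((s, t) = (1, -(g / d)) ∨ (s, t) = (-1, g / d)) := by
  simp only [ip] at hL
  have hdne : d ≠ 0 := by omega
  have h2 : 2 * (s * (s * (g - 1) + t * d)) = 2 * (-1) := by linear_combination hL
  have key : s * (s * (g - 1) + t * d) = -1 := by omega
  have hu : IsUnit s := IsUnit.of_mul_eq_one (a := s) (-(s * (g - 1) + t * d)) (by linear_combination -key)
  rcases Int.isUnit_iff.mp hu with hs | hs
  · subst hs
    have htd : g = d * -t := by linear_combination key
    refine ⟨⟨-t, htd⟩, Or.inl ?_⟩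
    have : g / d = -t := by rw [htd, Int.mul_ediv_cancel_left _ hdne]
    simp [this]
  · subst hs
    have htd : g = d * t := by linear_combination key
    refine ⟨⟨t, htd⟩, Or.inr ?_⟩
    have : g / d = t := by rw [htd, Int.mul_ediv_cancel_left _ hdne]
    simp [this]
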